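/- Let A ∈ M_{m,n}(r,c) and let B be the scaling of A with row scaling coefficients R_1,…,R_m ∈ ℂ^{r×r} and column scaling coefficients C_1,…,C_n ∈ ℂ^{c×c} (all nonsingular), i.e. B_{ij} = R_i·A_{ij}·C_j. Then cap(B) = (Π_{j=1}^n |det(C_j)|)² · (Π_{i=1}^m |det(R_i)|)^{2nc/(mr)} · cap(A). -/

import Mathlib

open Matrix BigOperators Pointwise
open scoped ComplexOrder

noncomputable section

lemma aux_posdef {r : ℕ} {X Rm : Matrix (Fin r) (Fin r) ℂ} (hX : X.PosDef)
    (hR : Rm.det ≠ 0) {t : ℝ} (ht : 0 < t) : ((t : ℂ) • (Rmᴴ * X * Rm)).PosDef := by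
  have hHerm : (Rmᴴ * X * Rm).IsHermitian := isHermitian_conjTranspose_mul_mul Rm hX.1
  rw [posDef_iff_dotProduct_mulVec]
  constructor
  · show ((t : ℂ) • (Rmᴴ * X * Rm))ᴴ = _
    rw [conjTranspose_smul, Complex.star_def, Complex.conj_ofReal, hHerm.eq]
  · intro v hv
    have hinj : Function.Injective (Rm.mulVec) :=
      Matrix.mulVec_injective_iff_isUnit.mpr ((Matrix.isUnit_iff_isUnit_det Rm).2
        (isUnit_iff_ne_zero.2 hR))
    have hw : Rm *ᵥ v ≠ 0 := fun h => hv (hinj (by simpa using h))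
    have hq : star v ⬝ᵥ (Rmᴴ * X * Rm) *ᵥ v = star (Rm *ᵥ v) ⬝ᵥ X *ᵥ (Rm *ᵥ v) := by
      rw [star_mulVec, ← dotProduct_mulVec, mulVec_mulVec, mulVec_mulVec]
    rw [smul_mulVec, dotProduct_smul, hq, smul_eq_mul]
    exact mul_pos (by exact_mod_cast ht) (hX.dotProduct_mulVec_pos hw)

lemma capSet_subset {m n r c : ℕ} (hm : 0 < m) (hr : 0 < r)
    (A B : Fin m → Fin n → Matrix (Fin r) (Fin c) ℂ)
    (R : Fin m → Matrix (Fin r) (Fin r) ℂ) (C : Fin n → Matrix (Fin c) (Fin c) ℂ)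
    (hR : ∀ i, (R i).det ≠ 0) (hC : ∀ j, (C j).det ≠ 0)
    (hB : ∀ i j, B i j = R i * A i j * C j) :
    { z : ℝ | ∃ X : Fin m → Matrix (Fin r) (Fin r) ℂ,
      (∀ i, (X i).PosDef) ∧ (∏ i, (X i).det) = 1 ∧
      z = ∏ j, ((((n : ℂ) * c / ((m : ℂ) * r)) • ∑ i, (B i j)ᴴ * X i * B i j).det).re } ⊆
    ((∏ j, ‖(C j).det‖) ^ 2 *
      (∏ i, ‖(R i).det‖) ^ ((2 * (n : ℝ) * c) / ((m : ℝ) * r))) •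
    { z : ℝ | ∃ X : Fin m → Matrix (Fin r) (Fin r) ℂ,
      (∀ i, (X i).PosDef) ∧ (∏ i, (X i).det) = 1 ∧
      z = ∏ j, ((((n : ℂ) * c / ((m : ℂ) * r)) • ∑ i, (A i j)ᴴ * X i * A i j).det).re } := by
  rintro z ⟨X, hXpos, hX1, rfl⟩
  have hmr : (m : ℝ) * (r : ℝ) ≠ 0 :=
    mul_ne_zero (Nat.cast_ne_zero.2 hm.ne') (Nat.cast_ne_zero.2 hr.ne')
  set P : ℝ := ∏ i, ‖(R i).det‖ with hPdef
  have hP : 0 < P := Finset.prod_pos fun i _ => norm_pos_iff.mpr (hR i)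
  set lam : ℝ := P ^ (-(2 : ℝ) / ((m : ℝ) * (r : ℝ))) with hlam
  have hlam0 : 0 < lam := Real.rpow_pos_of_pos hP _
  set s : ℂ := ((n : ℂ) * c / ((m : ℂ) * r)) with hs
  set Y : Fin m → Matrix (Fin r) (Fin r) ℂ :=
    fun i => (lam : ℂ) • ((R i)ᴴ * X i * R i) with hY
  set M : Fin n → Matrix (Fin c) (Fin c) ℂ :=
    fun j => ∑ i, (A i j)ᴴ * ((R i)ᴴ * X i * R i) * A i j with hM
  have hYpos : ∀ i, (Y i).PosDef := fun i => aux_posdef (hXpos i) (hR i) hlam0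
  -- real exponent facts
  have hlampow : ∀ k : ℕ, lam ^ k = P ^ (-(2 : ℝ) / ((m : ℝ) * (r : ℝ)) * k) := by
    intro k
    rw [hlam, ← Real.rpow_natCast (P ^ (-(2 : ℝ) / ((m : ℝ) * (r : ℝ)))) k,
      ← Real.rpow_mul hP.le]
  have hYdet : ∏ i, (Y i).det = 1 := by
    have h1 : ∀ i, (Y i).det = (lam : ℂ) ^ r * (star (R i).det * (X i).det * (R i).det) := by
      intro i
      rw [hY]
      simp only [det_smul, det_mul, det_conjTranspose, Fintype.card_fin]
    calc ∏ i, (Y i).det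
        = ∏ i, ((lam : ℂ) ^ r * (star (R i).det * (X i).det * (R i).det)) :=
          Finset.prod_congr rfl fun i _ => h1 i
      _ = ((lam : ℂ) ^ r) ^ m *
          ((∏ i, star (R i).det) * (∏ i, (X i).det) * (∏ i, (R i).det)) := by
          rw [Finset.prod_mul_distrib, Finset.prod_mul_distrib, Finset.prod_mul_distrib,
            Finset.prod_const, Finset.card_univ, Fintype.card_fin]
      _ = ((lam ^ (r * m) : ℝ) : ℂ) * ((P ^ 2 : ℝ) : ℂ) := by
          rw [hX1, mul_one, ← star_prod]
          rw [mul_comm (star _) _, Complex.star_def, Complex.mul_conj, ← Complex.sq_norm,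
            norm_prod, ← hPdef]
          congr 1
          rw [← pow_mul]
          exact (Complex.ofReal_pow _ _).symm
      _ = 1 := by
          have h4 : lam ^ (r * m) * P ^ 2 = 1 := by
            rw [hlampow (r * m),
              show (P ^ 2 = P ^ ((2:ℕ):ℝ)) from (Real.rpow_natCast P 2).symm,
              ← Real.rpow_add hP,
              show (-(2:ℝ) / ((m:ℝ) * (r:ℝ)) * ((r * m : ℕ) : ℝ) + ((2:ℕ):ℝ)) = 0 by
                push_cast; field_simp; ring]
            exact Real.rpow_zero P
          rw [← Complex.ofReal_mul, h4, Complex.ofReal_one]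
  have hBsum : ∀ j, (∑ i, (B i j)ᴴ * X i * B i j) = (C j)ᴴ * M j * C j := by
    intro j
    rw [hM]
    simp only
    rw [Finset.mul_sum, Finset.sum_mul]
    exact Finset.sum_congr rfl fun i _ => by
      simp [hB, conjTranspose_mul, Matrix.mul_assoc]
  have hAsum : ∀ j, (∑ i, (A i j)ᴴ * Y i * A i j) = (lam : ℂ) • M j := by
    intro j
    rw [hM]
    simp only
    rw [Finset.smul_sum]
    exact Finset.sum_congr rfl fun i _ => by
      rw [Matrix.mul_smul, Matrix.smul_mul]
  have hDB : ∀ j, ((s • ∑ i, (B i j)ᴴ * X i * B i j).det).re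
      = ‖(C j).det‖ ^ 2 * ((s • M j).det).re := by
    intro j
    rw [hBsum j]
    have h2 : (C j)ᴴ * (s • M j) * C j = s • ((C j)ᴴ * M j * C j) := by
      rw [Matrix.mul_smul, Matrix.smul_mul]
    rw [← h2, det_mul, det_mul, det_conjTranspose]
    have h3 : star (C j).det * (s • M j).det * (C j).det
        = ((‖(C j).det‖ ^ 2 : ℝ) : ℂ) * (s • M j).det := by
      rw [show star (C j).det * (s • M j).det * (C j).det
          = ((C j).det * star (C j).det) * (s • M j).det by ring,
        Complex.star_def, Complex.mul_conj, ← Complex.sq_norm]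
    rw [h3, Complex.re_ofReal_mul]
  have hDA : ∀ j, ((s • ∑ i, (A i j)ᴴ * Y i * A i j).det).re
      = lam ^ c * ((s • M j).det).re := by
    intro j
    rw [hAsum j, smul_comm s ((lam : ℂ)) (M j), det_smul, Fintype.card_fin,
      ← Complex.ofReal_pow, Complex.re_ofReal_mul]
  refine Set.mem_smul_set.mpr
    ⟨∏ j, ((s • ∑ i, (A i j)ᴴ * Y i * A i j).det).re, ⟨Y, hYpos, hYdet, rfl⟩, ?_⟩
  rw [smul_eq_mul, Finset.prod_congr rfl fun j _ => hDA j,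
    Finset.prod_congr rfl fun j _ => hDB j, Finset.prod_mul_distrib,
    Finset.prod_mul_distrib, Finset.prod_const, Finset.card_univ, Fintype.card_fin,
    Finset.prod_pow]
  have hkey : P ^ ((2 * (n : ℝ) * c) / ((m : ℝ) * r)) * (lam ^ c) ^ n = 1 := by
    rw [← pow_mul, hlampow (c * n), ← Real.rpow_add hP,
      show ((2 * (n : ℝ) * c) / ((m : ℝ) * r) + -(2:ℝ) / ((m:ℝ) * (r:ℝ)) * ((c * n : ℕ) : ℝ)) = 0
        by push_cast; field_simp; ring]
    exact Real.rpow_zero P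
  calc (∏ j, ‖(C j).det‖) ^ 2 * P ^ ((2 * (n : ℝ) * c) / ((m : ℝ) * r)) *
        ((lam ^ c) ^ n * ∏ j, ((s • M j).det).re)
      = ((∏ j, ‖(C j).det‖) ^ 2 * ∏ j, ((s • M j).det).re) *
        (P ^ ((2 * (n : ℝ) * c) / ((m : ℝ) * r)) * (lam ^ c) ^ n) := by ring
    _ = (∏ j, ‖(C j).det‖) ^ 2 * ∏ j, ((s • M j).det).re := by
        rw [hkey, mul_one]

/-- The capacity of a block matrix `A ∈ M_{m,n}(r,c)`. -/
def cap {m n r c : ℕ} (A : Fin m → Fin n → Matrix (Fin r) (Fin c) ℂ) : ℝ :=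
  sInf { z : ℝ | ∃ X : Fin m → Matrix (Fin r) (Fin r) ℂ,
    (∀ i, (X i).PosDef) ∧ (∏ i, (X i).det) = 1 ∧
    z = ∏ j, ((((n : ℂ) * c / ((m : ℂ) * r)) • ∑ i, (A i j)ᴴ * X i * A i j).det).re }

/-- Claim 2.10: the capacity of a scaling. -/
theorem cap_scaling {m n r c : ℕ}
    (hm : 0 < m) (hn : 0 < n) (hr : 0 < r) (hc : 0 < c)
    (A B : Fin m → Fin n → Matrix (Fin r) (Fin c) ℂ)
    (R : Fin m → Matrix (Fin r) (Fin r) ℂ) (C : Fin n → Matrix (Fin c) (Fin c) ℂ)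
    (hR : ∀ i, (R i).det ≠ 0) (hC : ∀ j, (C j).det ≠ 0)
    (hB : ∀ i j, B i j = R i * A i j * C j) :
    cap B = (∏ j, ‖(C j).det‖) ^ 2 *
      (∏ i, ‖(R i).det‖) ^ ((2 * (n : ℝ) * c) / ((m : ℝ) * r)) * cap A := by
  set k : ℝ := (∏ j, ‖(C j).det‖) ^ 2 *
      (∏ i, ‖(R i).det‖) ^ ((2 * (n : ℝ) * c) / ((m : ℝ) * r)) with hk
  have hPC : 0 < ∏ j, ‖(C j).det‖ :=
    Finset.prod_pos fun j _ => norm_pos_iff.mpr (hC j)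
  have hPR : 0 < ∏ i, ‖(R i).det‖ :=
    Finset.prod_pos fun i _ => norm_pos_iff.mpr (hR i)
  have hkpos : 0 < k := mul_pos (pow_pos hPC 2) (Real.rpow_pos_of_pos hPR _)
  -- inverse scaling data
  have hRinv : ∀ i, ((R i)⁻¹).det ≠ 0 := by
    intro i
    rw [Matrix.det_nonsing_inv, Ring.inverse_eq_inv']
    exact inv_ne_zero (hR i)
  have hCinv : ∀ j, ((C j)⁻¹).det ≠ 0 := by
    intro j
    rw [Matrix.det_nonsing_inv, Ring.inverse_eq_inv']
    exact inv_ne_zero (hC j)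
  have hA' : ∀ i j, A i j = (R i)⁻¹ * B i j * (C j)⁻¹ := by
    intro i j
    rw [hB i j, Matrix.mul_assoc (R i),
      Matrix.nonsing_inv_mul_cancel_left _ _ (isUnit_iff_ne_zero.2 (hR i)),
      Matrix.mul_nonsing_inv_cancel_right _ _ (isUnit_iff_ne_zero.2 (hC j))]
  have h1 := capSet_subset hm hr A B R C hR hC hB
  have h2 := capSet_subset hm hr B A (fun i => (R i)⁻¹) (fun j => (C j)⁻¹) hRinv hCinv hA'
  have hkinv : (∏ j, ‖((fun j => (C j)⁻¹) j).det‖) ^ 2 *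
      (∏ i, ‖((fun i => (R i)⁻¹) i).det‖) ^ ((2 * (n : ℝ) * c) / ((m : ℝ) * r))
      = k⁻¹ := by
    have hc' : ∀ j : Fin n, ‖((C j)⁻¹).det‖ = (‖(C j).det‖)⁻¹ := by
      intro j
      rw [Matrix.det_nonsing_inv, Ring.inverse_eq_inv', norm_inv]
    have hr' : ∀ i : Fin m, ‖((R i)⁻¹).det‖ = (‖(R i).det‖)⁻¹ := by
      intro i
      rw [Matrix.det_nonsing_inv, Ring.inverse_eq_inv', norm_inv]
    simp only [hc', hr']
    rw [Finset.prod_inv_distrib, Finset.prod_inv_distrib,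
      Real.inv_rpow hPR.le, inv_pow, ← mul_inv, hk]
  rw [hkinv] at h2
  have hset : { z : ℝ | ∃ X : Fin m → Matrix (Fin r) (Fin r) ℂ,
      (∀ i, (X i).PosDef) ∧ (∏ i, (X i).det) = 1 ∧
      z = ∏ j, ((((n : ℂ) * c / ((m : ℂ) * r)) • ∑ i, (B i j)ᴴ * X i * B i j).det).re }
      = k • { z : ℝ | ∃ X : Fin m → Matrix (Fin r) (Fin r) ℂ,
      (∀ i, (X i).PosDef) ∧ (∏ i, (X i).det) = 1 ∧
      z = ∏ j, ((((n : ℂ) * c / ((m : ℂ) * r)) • ∑ i, (A i j)ᴴ * X i * A i j).det).re } := by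
    refine Set.Subset.antisymm h1 ?_
    calc k • { z : ℝ | ∃ X : Fin m → Matrix (Fin r) (Fin r) ℂ,
          (∀ i, (X i).PosDef) ∧ (∏ i, (X i).det) = 1 ∧
          z = ∏ j, ((((n : ℂ) * c / ((m : ℂ) * r)) • ∑ i, (A i j)ᴴ * X i * A i j).det).re }
        ⊆ k • k⁻¹ • { z : ℝ | ∃ X : Fin m → Matrix (Fin r) (Fin r) ℂ,
          (∀ i, (X i).PosDef) ∧ (∏ i, (X i).det) = 1 ∧
          z = ∏ j, ((((n : ℂ) * c / ((m : ℂ) * r)) • ∑ i, (B i j)ᴴ * X i * B i j).det).re } :=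
          Set.smul_set_mono h2
      _ = _ := by rw [smul_smul, mul_inv_cancel₀ hkpos.ne', one_smul]
  show sInf _ = k * sInf _
  rw [hset, Real.sInf_smul_of_nonneg hkpos.le, smul_eq_mul]
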